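/- Let g be a complex semisimple Lie algebra with sl2-triple (e,h,f), weight decomposition g = ⊕ g(i), ℓ ⊂ g(-1) a Lagrangian subspace for the symplectic form (x,y) ↦ κ(e,[x,y]), and m := ℓ ⊕ (⊕_{i ≤ -2} g(i)). Then m is a nilpotent Lie subalgebra of g. -/

import Mathlib

open Module LieAlgebra

/-- Let `g` be a complex semisimple Lie algebra with `sl₂`-triple
`(e, h, f)`, weight decomposition `g = ⊕ g(i)` for `ad h`, and `ℓ ⊆ g(-1)` a Lagrangian
subspace for the symplectic form `(x, y) ↦ κ(e, ⁅x, y⁆)` (isotropic and maximal isotropic).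
Then `m := ℓ ⊕ (⊕_{i ≤ -2} g(i))` is a nilpotent Lie subalgebra of `g`, i.e. there is a
Lie subalgebra of `g` whose underlying subspace is `ℓ ⊔ ⨆_{i ≤ -2} g(i)` and this Lie
subalgebra is nilpotent. -/
theorem stmt1 (L : Type*) [LieRing L] [LieAlgebra ℂ L] [Module.Finite ℂ L]
    [LieAlgebra.IsSemisimple ℂ L] (h e f : L) (ht : IsSl2Triple h e f)
    (ℓ : Submodule ℂ L)
    (hℓsub : ℓ ≤ Module.End.eigenspace (LieAlgebra.ad ℂ L h) (-1 : ℂ))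
    (hℓiso : ∀ x ∈ ℓ, ∀ y ∈ ℓ, killingForm ℂ L e ⁅x, y⁆ = 0)
    (hℓmax : ∀ x ∈ Module.End.eigenspace (LieAlgebra.ad ℂ L h) (-1 : ℂ),
      (∀ y ∈ ℓ, killingForm ℂ L e ⁅x, y⁆ = 0) → x ∈ ℓ)
    (m : Submodule ℂ L)
    (hm : m = ℓ ⊔ ⨆ i : ℤ, ⨆ _ : i ≤ -2,
      Module.End.eigenspace (LieAlgebra.ad ℂ L h) (i : ℂ)) :
    ∃ K : LieSubalgebra ℂ L, K.toSubmodule = m ∧ LieRing.IsNilpotent K := by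
  classical
  set A := LieAlgebra.ad ℂ L h with hA
  set g : ℤ → Submodule ℂ L := fun i => Module.End.eigenspace A (i : ℂ) with hg
  -- brackets of eigenvectors
  have hbr : ∀ (a b : ℤ) (x y : L), x ∈ g a → y ∈ g b → ⁅x, y⁆ ∈ g (a + b) := by
    intro a b x y hx hy
    rw [hg] at *
    rw [Module.End.mem_eigenspace_iff] at hx hy ⊢
    have hAxy : A ⁅x, y⁆ = ⁅A x, y⁆ + ⁅x, A y⁆ := by
      simp only [hA, LieAlgebra.ad_apply]
      exact leibniz_lie h x y
    rw [hAxy, hx, hy, smul_lie, lie_smul, ← add_smul]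
    push_cast
    ring_nf
  have hbr' : ∀ (b : ℤ) (x y : L), x ∈ ℓ → y ∈ g b → ⁅x, y⁆ ∈ g (b - 1) := by
    intro b x y hx hy
    have hx' : x ∈ g (-1) := by
      show x ∈ Module.End.eigenspace A (((-1 : ℤ) : ℂ))
      rw [show (((-1 : ℤ) : ℂ)) = (-1 : ℂ) by norm_num]
      exact hℓsub hx
    have := hbr (-1) b x y hx' hy
    rwa [show (-1 : ℤ) + b = b - 1 by ring] at this
  -- the filtration
  set P : ℤ → Submodule ℂ L := fun k => ⨆ i : ℤ, ⨆ _ : i ≤ k, g i with hP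
  have gle : ∀ i k : ℤ, i ≤ k → g i ≤ P k := fun i k hik =>
    le_iSup_of_le i (le_iSup_of_le hik le_rfl)
  have Pmono : ∀ a b : ℤ, a ≤ b → P a ≤ P b := by
    intro a b hab
    exact iSup_le fun i => iSup_le fun hi => gle i b (hi.trans hab)
  -- m ≤ P (-1)
  have hmle : m ≤ P (-1) := by
    rw [hm]
    apply sup_le
    · refine le_trans ?_ (gle (-1) (-1) le_rfl)
      show ℓ ≤ Module.End.eigenspace A (((-1 : ℤ) : ℂ))
      rw [show (((-1 : ℤ) : ℂ)) = (-1 : ℂ) by norm_num]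
      exact hℓsub
    · exact iSup_le fun i => iSup_le fun hi => gle i (-1) (by omega)
  -- key step: ad of elements of m lowers the filtration (on eigenvectors)
  have key1 : ∀ x ∈ m, ∀ (j : ℤ), ∀ y ∈ g j, ⁅x, y⁆ ∈ P (j - 1) := by
    intro x hx j y hy
    rw [hm, Submodule.mem_sup] at hx
    obtain ⟨u, hu, v, hv, rfl⟩ := hx
    rw [add_lie]
    apply add_mem
    · have := hbr' j u y hu hy
      exact gle (j - 1) (j - 1) le_rfl this
    · have hvy' : ⁅v, y⁆ = -⁅y, v⁆ := (lie_skew v y).symm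
      rw [hvy']
      apply neg_mem
      have hmap : Submodule.map (LieAlgebra.ad ℂ L y)
          (⨆ i : ℤ, ⨆ _ : i ≤ -2, g i) ≤ P (j - 1) := by
        rw [Submodule.map_iSup]
        apply iSup_le; intro i
        rw [Submodule.map_iSup]
        apply iSup_le; intro hi
        rintro z ⟨w, hw, rfl⟩
        rw [LieAlgebra.ad_apply]
        have := hbr j i y w hy hw
        exact gle (j + i) (j - 1) (by omega) this
      have : (LieAlgebra.ad ℂ L y) v ∈
          Submodule.map (LieAlgebra.ad ℂ L y) (⨆ i : ℤ, ⨆ _ : i ≤ -2, g i) :=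
        Submodule.mem_map_of_mem hv
      rw [LieAlgebra.ad_apply] at this
      exact hmap (by rwa [← LieAlgebra.ad_apply (R := ℂ)] at this)
  -- key step for all elements of the filtration
  have key : ∀ x ∈ m, ∀ (k : ℤ), ∀ y ∈ P k, ⁅x, y⁆ ∈ P (k - 1) := by
    intro x hx k y hy
    have hmap : Submodule.map (LieAlgebra.ad ℂ L x) (P k) ≤ P (k - 1) := by
      rw [hP]
      simp only [Submodule.map_iSup]
      apply iSup_le; intro i
      apply iSup_le; intro hi
      rintro z ⟨w, hw, rfl⟩
      rw [LieAlgebra.ad_apply]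
      exact Pmono (i - 1) (k - 1) (by omega) (key1 x hx i w hw)
    have := hmap (Submodule.mem_map_of_mem (f := LieAlgebra.ad ℂ L x) hy)
    rwa [LieAlgebra.ad_apply] at this
  -- closure under bracket
  have hclosed : ∀ x ∈ m, ∀ y ∈ m, ⁅x, y⁆ ∈ m := by
    intro x hx y hy
    have h1 : ⁅x, y⁆ ∈ P (-1 - 1) := key x hx (-1) y (hmle hy)
    have h2 : P (-1 - 1) ≤ m := by
      rw [hm]
      refine le_trans ?_ le_sup_right
      exact iSup_le fun i => iSup_le fun hi =>
        le_iSup_of_le i (le_iSup_of_le (by omega) le_rfl)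
    exact h2 h1
  -- the Lie subalgebra
  refine ⟨{ m with lie_mem' := fun {x y} hx hy => hclosed x hx y hy }, rfl, ?_⟩
  set K : LieSubalgebra ℂ L := { m with lie_mem' := fun {x y} hx hy => hclosed x hx y hy }
  -- finiteness of eigenvalues
  have hL : FiniteDimensional ℂ L := inferInstance
  have hfin : Set.Finite {i : ℤ | g i ≠ ⊥} := by
    have h1 := A.finite_hasEigenvalue
    apply Set.Finite.of_finite_image (f := fun i : ℤ => (i : ℂ))
    · apply h1.subset
      rintro _ ⟨i, hi, rfl⟩
      exact hi
    · exact fun a _ b _ hab => Int.cast_injective hab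
  obtain ⟨N, hN⟩ := hfin.bddBelow
  have hPbot : ∀ k : ℤ, k < N → P k = ⊥ := by
    intro k hk
    apply le_bot_iff.mp
    apply iSup_le; intro i
    apply iSup_le; intro hi
    have : g i = ⊥ := by
      by_contra hne
      have := hN hne
      omega
    exact this.le
  -- nilpotency via Engel
  rw [LieAlgebra.isNilpotent_iff_forall (R := ℂ)]
  intro x
  obtain ⟨n, hn2⟩ : ∃ n : ℕ, -1 - (n : ℤ) < N := ⟨(1 - N).toNat, by omega⟩
  refine ⟨n, ?_⟩
  have coe_pow : ∀ (j : ℕ) (y : K),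
      (((LieAlgebra.ad ℂ K x) ^ j) y : L) = ((LieAlgebra.ad ℂ L (x : L)) ^ j) (y : L) := by
    intro j
    induction j with
    | zero => intro y; simp
    | succ j ih =>
      intro y
      rw [pow_succ, pow_succ]
      simp only [Module.End.mul_apply]
      rw [ih ((LieAlgebra.ad ℂ K x) y)]
      congr 1
  ext y
  have hxm : (x : L) ∈ m := x.2
  have hym : (y : L) ∈ m := y.2
  have mem : ∀ j : ℕ, ((LieAlgebra.ad ℂ L (x : L)) ^ j) (y : L) ∈ P (-1 - j) := by
    intro j
    induction j with
    | zero => simpa using hmle hym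
    | succ j ih =>
      rw [pow_succ']
      simp only [Module.End.mul_apply]
      have := key (x : L) hxm (-1 - j) _ ih
      rw [LieAlgebra.ad_apply]
      have hcast : (-1 - (j : ℤ)) - 1 = -1 - ((j + 1 : ℕ) : ℤ) := by push_cast; ring
      rwa [hcast] at this
  have hbot : P (-1 - (n : ℤ)) = ⊥ := hPbot _ hn2
  have := mem n
  rw [hbot, Submodule.mem_bot] at this
  have hz : (((LieAlgebra.ad ℂ K x ^ n) y : K) : L) = ((0 : K) : L) := by
    rw [coe_pow n y, this]; rfl
  simpa using Subtype.ext hz
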